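/- Let n ≥ 3 be odd and m ≥ 2. The nested sum S_n[S_m] of the finite Sugihara chains S_n and S_m (viewed as quasi relation algebras, with the carriers made disjoint) is isomorphic to the finite Sugihara chain S_{n+m−1}, via the map sending a_j^K ↦ a_{j−ℓ} for −k ≤ j ≤ −1, a_j^K ↦ a_{j+ℓ} for 1 ≤ j ≤ k, and a_i^L ↦ a_i, where n = 2k+1 and m = 2ℓ or m = 2ℓ+1. -/
import Mathlib


/-- The index set of the finite Sugihara chain `Sₙ` (as a subset of `ℤ`):
for `n = 2k` the indices `-k,…,-1,1,…,k`, and for `n = 2k+1` the indices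
`-k,…,-1,0,1,…,k`. -/
def sugSet (n : ℕ) : Set ℤ := {i : ℤ | 2 * |i| ≤ (n : ℤ) ∧ (Even n → i ≠ 0)}

/-- The index of the monoid identity of `Sₙ`: `a₁` if `n` is even, `a₀` if odd. -/
def sugOneIdx (n : ℕ) : ℤ := if Even n then 1 else 0

/-- Multiplication of the Sugihara chain on indices:
`aᵢ · aⱼ = aᵢ` if `|j| < |i|`, `aⱼ` if `|i| < |j|`, and `a_{min(i,j)}` if `|i| = |j|`. -/
def sugMulIdx (i j : ℤ) : ℤ := if |j| < |i| then i else if |i| < |j| then j else min i j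

/-- The carrier of the nested sum `Sₙ[Sₘ]` inside `ℤ ⊕ ℤ`: the left summand
encodes `Sₙ ∖ {a₀}` (for odd `n`, whose identity is `a₀`), the right summand
encodes `Sₘ`.  (Disjointness of the carriers is built into the sum type.) -/
def snsCar (n m : ℕ) : Set (ℤ ⊕ ℤ) :=
  {x | match x with
       | Sum.inl j => j ∈ sugSet n ∧ j ≠ 0
       | Sum.inr i => i ∈ sugSet m}

/-- Multiplication of the nested sum `Sₙ[Sₘ]` (an `L`-argument is replaced by
the identity `a₀` of `K = Sₙ` when the other argument lies in `K ∖ {a₀}`). -/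
def snsMul : ℤ ⊕ ℤ → ℤ ⊕ ℤ → ℤ ⊕ ℤ
  | Sum.inl j, Sum.inl j' => Sum.inl (sugMulIdx j j')
  | Sum.inl j, Sum.inr _ => Sum.inl (sugMulIdx j 0)
  | Sum.inr _, Sum.inl j' => Sum.inl (sugMulIdx 0 j')
  | Sum.inr i, Sum.inr i' => Sum.inr (sugMulIdx i i')

/-- Meet of the nested sum `Sₙ[Sₘ]`. -/
def snsInf : ℤ ⊕ ℤ → ℤ ⊕ ℤ → ℤ ⊕ ℤ
  | Sum.inl j, Sum.inl j' => Sum.inl (min j j')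
  | Sum.inl j, Sum.inr i => if 0 ≤ j then Sum.inr i else Sum.inl (min j 0)
  | Sum.inr i, Sum.inl j => if 0 ≤ j then Sum.inr i else Sum.inl (min j 0)
  | Sum.inr i, Sum.inr i' => Sum.inr (min i i')

/-- Join of the nested sum `Sₙ[Sₘ]`. -/
def snsSup : ℤ ⊕ ℤ → ℤ ⊕ ℤ → ℤ ⊕ ℤ
  | Sum.inl j, Sum.inl j' => Sum.inl (max j j')
  | Sum.inl j, Sum.inr i => if j ≤ 0 then Sum.inr i else Sum.inl (max j 0)
  | Sum.inr i, Sum.inl j => if j ≤ 0 then Sum.inr i else Sum.inl (max j 0)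
  | Sum.inr i, Sum.inr i' => Sum.inr (max i i')

/-- The componentwise negation `∼ = − = ¬` of the nested sum `Sₙ[Sₘ]`
(`∼aⱼ = a₋ⱼ` in a Sugihara chain). -/
def snsNeg : ℤ ⊕ ℤ → ℤ ⊕ ℤ
  | Sum.inl j => Sum.inl (-j)
  | Sum.inr i => Sum.inr (-i)

/-- The identity of the nested sum `Sₙ[Sₘ]`: `1_{K[L]} = 1_L`. -/
def snsOne (m : ℕ) : ℤ ⊕ ℤ := Sum.inr (sugOneIdx m)

/-- The negation constant of the nested sum `Sₙ[Sₘ]`: `0_{K[L]} = 0_L = ∼1_L`. -/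
def snsZero (m : ℕ) : ℤ ⊕ ℤ := Sum.inr (-sugOneIdx m)

/-- The map `Sₙ[Sₘ] → S_{n+m-1}` sending `aⱼᴷ ↦ a_{j-ℓ}` for `j < 0`,
`aⱼᴷ ↦ a_{j+ℓ}` for `j > 0`, and `aᵢᴸ ↦ aᵢ`, where `ℓ = ⌊m/2⌋`. -/
def sugIso (m : ℕ) : ℤ ⊕ ℤ → ℤ
  | Sum.inl j => if j < 0 then j - ((m / 2 : ℕ) : ℤ) else j + ((m / 2 : ℕ) : ℤ)
  | Sum.inr i => i


/-- For odd `n ≥ 3` and `m ≥ 2`, the nested sum `Sₙ[Sₘ]` of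
the Sugihara chains `Sₙ` and `Sₘ` (viewed as qRAs) is isomorphic to the
Sugihara chain `S_{n+m-1}` via the indicated map: the map is a bijection of
the carriers preserving `·`, `∧`, `∨`, the negation `∼ (= − = ¬)`, `1` and `0`. -/

theorem iabs (a : ℤ) : |a| = if 0 ≤ a then a else -a := by
  split_ifs with h
  · exact abs_of_nonneg h
  · exact abs_of_neg (by omega)

set_option maxHeartbeats 2000000 in
theorem key_mul (L j j' : ℤ) (hL : 1 ≤ L) :
    (if sugMulIdx j j' < 0 then sugMulIdx j j' - L else sugMulIdx j j' + L)
      = sugMulIdx (if j < 0 then j - L else j + L) (if j' < 0 then j' - L else j' + L) := by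
  simp only [sugMulIdx, iabs]; split_ifs <;> omega

set_option maxHeartbeats 1000000 in
theorem key_mul_lr (L j i : ℤ) (hL : 1 ≤ L) (hj : j ≠ 0) (hi1 : -L ≤ i) (hi2 : i ≤ L) :
    (if sugMulIdx j 0 < 0 then sugMulIdx j 0 - L else sugMulIdx j 0 + L)
      = sugMulIdx (if j < 0 then j - L else j + L) i := by
  simp only [sugMulIdx, iabs]; split_ifs <;> omega

set_option maxHeartbeats 1000000 in
theorem key_mul_rl (L j i : ℤ) (hL : 1 ≤ L) (hj : j ≠ 0) (hi1 : -L ≤ i) (hi2 : i ≤ L) :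
    (if sugMulIdx 0 j < 0 then sugMulIdx 0 j - L else sugMulIdx 0 j + L)
      = sugMulIdx i (if j < 0 then j - L else j + L) := by
  simp only [sugMulIdx, iabs]; split_ifs <;> omega

set_option maxHeartbeats 2000000 in
theorem sugihara_nestedSum_iso (n m : ℕ) (hn : 3 ≤ n) (hodd : Odd n) (hm : 2 ≤ m) :
    Set.BijOn (sugIso m) (snsCar n m) (sugSet (n + m - 1)) ∧
    (∀ x ∈ snsCar n m, ∀ y ∈ snsCar n m,
      sugIso m (snsMul x y) = sugMulIdx (sugIso m x) (sugIso m y) ∧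
      sugIso m (snsInf x y) = min (sugIso m x) (sugIso m y) ∧
      sugIso m (snsSup x y) = max (sugIso m x) (sugIso m y)) ∧
    (∀ x ∈ snsCar n m, sugIso m (snsNeg x) = -(sugIso m x)) ∧
    sugIso m (snsOne m) = sugOneIdx (n + m - 1) ∧
    sugIso m (snsZero m) = -(sugOneIdx (n + m - 1)) := by
  obtain ⟨k, hk⟩ := hodd
  have hL : 2 * ((m / 2 : ℕ) : ℤ) ≤ (m : ℤ) ∧ (m : ℤ) ≤ 2 * ((m / 2 : ℕ) : ℤ) + 1 ∧
      1 ≤ ((m / 2 : ℕ) : ℤ) := by omega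
  have hpar : Even (n + m - 1) ↔ Even m := by
    simp only [Nat.even_iff]; omega
  refine ⟨⟨?_, ?_, ?_⟩, ?_, ?_, ?_, ?_⟩
  · -- MapsTo
    rintro (j | i) hx <;>
      simp only [snsCar, sugSet, Set.mem_setOf_eq, iabs, Nat.even_iff, sugIso] at hx ⊢ <;>
      split_ifs at hx ⊢ <;> omega
  · -- InjOn
    rintro (j | i) hx (j' | i') hy hxy <;>
      simp only [snsCar, sugSet, Set.mem_setOf_eq, iabs, Nat.even_iff, sugIso,
        Sum.inl.injEq, Sum.inr.injEq] at hx hy hxy ⊢ <;>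
      split_ifs at hx hy hxy ⊢ <;> omega
  · -- SurjOn
    intro y hy
    simp only [sugSet, Set.mem_setOf_eq, iabs, Nat.even_iff] at hy
    simp only [Set.mem_image]
    by_cases h1 : y < -((m / 2 : ℕ) : ℤ)
    · refine ⟨Sum.inl (y + ((m / 2 : ℕ) : ℤ)), ?_, ?_⟩
      · simp only [snsCar, sugSet, Set.mem_setOf_eq, iabs, Nat.even_iff]
        split_ifs at hy ⊢ <;> omega
      · simp only [sugIso]; split_ifs at hy ⊢ <;> omega
    by_cases h2 : ((m / 2 : ℕ) : ℤ) < y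
    · refine ⟨Sum.inl (y - ((m / 2 : ℕ) : ℤ)), ?_, ?_⟩
      · simp only [snsCar, sugSet, Set.mem_setOf_eq, iabs, Nat.even_iff]
        split_ifs at hy ⊢ <;> omega
      · simp only [sugIso]; split_ifs at hy ⊢ <;> omega
    · refine ⟨Sum.inr y, ?_, ?_⟩
      · simp only [snsCar, sugSet, Set.mem_setOf_eq, iabs, Nat.even_iff]
        split_ifs at hy ⊢ <;> omega
      · simp only [sugIso]
  · -- operations
    rintro (j | i) hx (j' | i') hy <;>
      simp only [snsCar, sugSet, Set.mem_setOf_eq, iabs] at hx hy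
    · refine ⟨?_, ?_, ?_⟩
      · simpa only [snsMul, sugIso] using key_mul ((m / 2 : ℕ) : ℤ) j j' (by omega)
      · simp only [snsInf, sugIso]; split_ifs <;> omega
      · simp only [snsSup, sugIso]; split_ifs <;> omega
    · have hj0 : j ≠ 0 := hx.2
      have hi : -((m / 2 : ℕ) : ℤ) ≤ i' ∧ i' ≤ ((m / 2 : ℕ) : ℤ) := by
        rcases hy with ⟨h1, -⟩; split_ifs at h1 <;> omega
      refine ⟨?_, ?_, ?_⟩
      · simpa only [snsMul, sugIso] using
          key_mul_lr ((m / 2 : ℕ) : ℤ) j i' (by omega) hj0 hi.1 hi.2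
      · simp only [snsInf]; split_ifs <;> simp only [sugIso] <;> split_ifs <;> omega
      · simp only [snsSup]; split_ifs <;> simp only [sugIso] <;> split_ifs <;> omega
    · have hj0 : j' ≠ 0 := hy.2
      have hi : -((m / 2 : ℕ) : ℤ) ≤ i ∧ i ≤ ((m / 2 : ℕ) : ℤ) := by
        rcases hx with ⟨h1, -⟩; split_ifs at h1 <;> omega
      refine ⟨?_, ?_, ?_⟩
      · simpa only [snsMul, sugIso] using
          key_mul_rl ((m / 2 : ℕ) : ℤ) j' i (by omega) hj0 hi.1 hi.2
      · simp only [snsInf]; split_ifs <;> simp only [sugIso] <;> split_ifs <;> omega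
      · simp only [snsSup]; split_ifs <;> simp only [sugIso] <;> split_ifs <;> omega
    · exact ⟨by simp only [snsMul, sugIso], by simp only [snsInf, sugIso],
        by simp only [snsSup, sugIso]⟩
  · -- negation
    rintro (j | i) hx
    · have hj0 : j ≠ 0 := hx.2
      simp only [snsNeg, sugIso]; split_ifs <;> omega
    · rfl
  · simp only [snsOne, sugIso, sugOneIdx, hpar]
  · simp only [snsZero, sugIso, sugOneIdx, hpar]
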